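/- Schützenberger's theorem: Let A be a finite alphabet and L ⊆ A*. The following are equivalent: (1) L is star-free; (2) the syntactic monoid Synt(L) = A*/≡_L is finite and aperiodic; (3) L is recognized by a finite aperiodic monoid, i.e., there exist a finite aperiodic monoid M and a monoid homomorphism φ : A* → M with φ^{-1}(φ(L)) = L. -/

import Mathlib

/-- Concatenation of languages: `K · K' = {uv : u ∈ K, v ∈ K'}`. -/
def Lang.cat {α : Type*} (K K' : Set (FreeMonoid α)) : Set (FreeMonoid α) :=
  {w | ∃ u ∈ K, ∃ v ∈ K', w = u * v}

/-- The class `SF(A*)` of star-free languages over the alphabet `A`: the smallest class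
containing `A*` and `{a}` for each letter `a`, closed under union, set difference and
concatenation. -/
inductive SF {A : Type*} : Set (FreeMonoid A) → Prop
  | full : SF Set.univ
  | letter (a : A) : SF {FreeMonoid.of a}
  | union {K K'} : SF K → SF K' → SF (K ∪ K')
  | diff {K K'} : SF K → SF K' → SF (K \ K')
  | concat {K K'} : SF K → SF K' → SF (Lang.cat K K')

/-- The syntactic congruence of `L ⊆ A*`: `u ≡_L v` iff for all `p, q ∈ A*`,
`p u q ∈ L ↔ p v q ∈ L`.  The syntactic monoid `Synt(L)` is its quotient
`(syntacticCon L).Quotient`. -/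
def syntacticCon {A : Type*} (L : Set (FreeMonoid A)) : Con (FreeMonoid A) where
  r u v := ∀ p q : FreeMonoid A, p * u * q ∈ L ↔ p * v * q ∈ L
  iseqv := ⟨fun _ _ _ => Iff.rfl, fun h p q => (h p q).symm,
    fun h h' p q => (h p q).trans (h' p q)⟩
  mul' {w x y z} h h' := by
    intro p q
    have h1 := h' (p * w) q
    have h2 := h p (z * q)
    simp only [mul_assoc] at h1 h2 ⊢
    exact h1.trans h2

/-- A monoid `M` is aperiodic if for every `x ∈ M` there is an `n ∈ ℕ`
with `x ^ n = x ^ (n + 1)`. -/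
def Aperiodic (M : Type*) [Monoid M] : Prop :=
  ∀ x : M, ∃ n : ℕ, x ^ n = x ^ (n + 1)


namespace Schutz

open FreeMonoid



theorem pow_stab {M : Type*} [Monoid M] {x : M} {n : ℕ} (h : x ^ n = x ^ (n + 1)) :
    ∀ m, n ≤ m → x ^ m = x ^ n := by
  intro m hm
  induction m with
  | zero => exact (Nat.le_zero.mp hm ▸ rfl)
  | succ k ih =>
      rcases Nat.lt_or_ge n (k + 1) with hk | hk
      · have hk' : n ≤ k := Nat.lt_succ_iff.mp hk
        calc x ^ (k + 1) = x ^ k * x := pow_succ x k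
        _ = x ^ n * x := by rw [ih hk']
        _ = x ^ (n + 1) := (pow_succ x n).symm
        _ = x ^ n := h.symm
      · have : n = k + 1 := le_antisymm hm hk
        rw [this]

variable {A : Type*}

theorem SF.empty : SF (∅ : Set (FreeMonoid A)) := by
  simpa using SF.diff SF.full SF.full

theorem SF.inter {K K' : Set (FreeMonoid A)} (h : SF K) (h' : SF K') : SF (K ∩ K') := by
  have : K ∩ K' = K \ (Set.univ \ K') := by ext w; simp
  rw [this]; exact h.diff (SF.full.diff h')

theorem SF.iUnion {ι : Type*} [Finite ι] {f : ι → Set (FreeMonoid A)}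
    (h : ∀ i, SF (f i)) : SF (⋃ i, f i) := by
  classical
  have := Fintype.ofFinite ι
  have key : ∀ s : Finset ι, SF (⋃ i ∈ s, f i) := by
    intro s
    induction s using Finset.induction with
    | empty => simpa using SF.empty
    | insert _ _ hx ih => rw [Finset.set_biUnion_insert]; exact (h _).union ih
  simpa using key Finset.univ

theorem contains_eq (a : A) :
    {w : FreeMonoid A | a ∈ w.toList} = Lang.cat (Lang.cat Set.univ {FreeMonoid.of a}) Set.univ := by
  ext w
  simp only [Set.mem_setOf_eq, Lang.cat, Set.mem_univ, Set.mem_setOf_eq]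
  constructor
  · intro hmem
    obtain ⟨s, t, hst⟩ := List.append_of_mem hmem
    refine ⟨ofList s * of a, ⟨ofList s, trivial, of a, rfl, rfl⟩, ofList t, trivial, ?_⟩
    apply toList.injective
    simpa using hst
  · rintro ⟨u, ⟨u', -, v', hv', rfl⟩, v, -, rfl⟩
    subst hv'
    simp [toList_mul]

theorem SF.contains (a : A) : SF {w : FreeMonoid A | a ∈ w.toList} := by
  rw [contains_eq]; exact (SF.full.concat (SF.letter a)).concat SF.full

theorem SF.cfree (c : A) : SF {w : FreeMonoid A | c ∉ w.toList} := by
  have : {w : FreeMonoid A | c ∉ w.toList} = Set.univ \ {w | c ∈ w.toList} := by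
    ext w; simp
  rw [this]; exact SF.full.diff (SF.contains c)

theorem ne_one_eq [Finite A] :
    {w : FreeMonoid A | w ≠ 1} = Lang.cat (⋃ a : A, {FreeMonoid.of a}) Set.univ := by
  ext w
  simp only [Set.mem_setOf_eq, Lang.cat, Set.mem_iUnion, Set.mem_singleton_iff, Set.mem_univ]
  constructor
  · intro hw
    have : w.toList ≠ [] := fun h => hw (toList.injective h)
    obtain ⟨a, t, ht⟩ := List.exists_cons_of_ne_nil this
    exact ⟨of a, ⟨a, rfl⟩, ofList t, trivial, toList.injective (by simpa using ht)⟩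
  · rintro ⟨u, ⟨a, rfl⟩, v, -, rfl⟩
    intro h
    have := congrArg toList h
    simp [toList_mul] at this
  
theorem SF.one [Finite A] : SF ({1} : Set (FreeMonoid A)) := by
  have h1 : SF {w : FreeMonoid A | w ≠ 1} := by
    rw [ne_one_eq]; exact (SF.iUnion fun a => SF.letter a).concat SF.full
  have : ({1} : Set (FreeMonoid A)) = Set.univ \ {w | w ≠ 1} := by ext w; simp
  rw [this]; exact SF.full.diff h1





/-- `L` is recognized by a finite aperiodic monoid. -/
def Recog {A : Type*} (L : Set (FreeMonoid A)) : Prop :=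
  ∃ (M : Type) (_ : Monoid M), Finite M ∧ Aperiodic M ∧
    ∃ φ : FreeMonoid A →* M, φ ⁻¹' (φ '' L) = L

theorem recog_iff_sat {A : Type*} {M : Type*} [Monoid M] (φ : FreeMonoid A →* M)
    (L : Set (FreeMonoid A)) :
    φ ⁻¹' (φ '' L) = L ↔ ∀ w u, φ w = φ u → u ∈ L → w ∈ L := by
  constructor
  · intro h w u he hu
    rw [← h]
    exact ⟨u, hu, he.symm⟩
  · intro h
    apply Set.Subset.antisymm
    · rintro w ⟨u, hu, he⟩
      exact h w u he.symm hu
    · intro w hw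
      exact ⟨w, hw, rfl⟩

/-! ### The three element monoid recognizing single letters -/

inductive N3 : Type
  | e | s | z
deriving DecidableEq

instance : Fintype N3 :=
  ⟨⟨{N3.e, N3.s, N3.z}, by decide⟩, fun x => by cases x <;> decide⟩

instance : Monoid N3 where
  one := N3.e
  mul x y := match x, y with
    | N3.e, y => y
    | x, N3.e => x
    | _, _ => N3.z
  one_mul x := by cases x <;> rfl
  mul_one x := by cases x <;> rfl
  mul_assoc x y z := by cases x <;> cases y <;> cases z <;> rfl

theorem N3.one_def : (1 : N3) = N3.e := rfl

theorem N3.aperiodic : Aperiodic N3 := by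
  intro x
  exact ⟨2, by cases x <;> rfl⟩

theorem N3.mul_eq_one {x y : N3} (h : x * y = 1) : x = 1 ∧ y = 1 := by
  cases x <;> cases y <;> first | exact ⟨rfl, rfl⟩ | exact absurd h (by decide)

theorem N3.mul_eq_s {x y : N3} (h : x * y = N3.s) :
    (x = N3.s ∧ y = 1) ∨ (x = 1 ∧ y = N3.s) := by
  cases x <;> cases y <;> revert h <;> decide

section Letter

variable {A : Type*}

open Classical in
noncomputable def letterHom (a : A) : FreeMonoid A →* N3 :=
  FreeMonoid.lift (fun b => if b = a then N3.s else N3.z)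

theorem letterHom_ne_one (a : A) (b : A) : letterHom a (of b) ≠ 1 := by
  classical
  simp only [letterHom, FreeMonoid.lift_eval_of]
  split <;> decide

theorem letterHom_eq_one (a : A) {w : FreeMonoid A} (h : letterHom a w = 1) : w = 1 := by
  induction w using FreeMonoid.inductionOn' with
  | one => rfl
  | of_mul x xs ih =>
      rw [map_mul] at h
      obtain ⟨h1, h2⟩ := N3.mul_eq_one h
      exact absurd h1 (letterHom_ne_one a x)

theorem letterHom_eq_s (a : A) {w : FreeMonoid A} (h : letterHom a w = N3.s) : w = of a := by
  classical
  induction w using FreeMonoid.inductionOn' with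
  | one => rw [map_one] at h; exact absurd h (by decide)
  | of_mul x xs ih =>
      rw [map_mul] at h
      rcases N3.mul_eq_s h with ⟨h1, h2⟩ | ⟨h1, h2⟩
      · have hx : x = a := by
          by_contra hxa
          simp [letterHom, FreeMonoid.lift_eval_of, hxa] at h1
        have : xs = 1 := letterHom_eq_one a h2
        rw [hx, this, mul_one]
      · exact absurd h1 (letterHom_ne_one a x)

theorem recog_letter (a : A) : Recog ({of a} : Set (FreeMonoid A)) := by
  classical
  refine ⟨N3, inferInstance, inferInstance, N3.aperiodic, letterHom a, ?_⟩
  rw [recog_iff_sat]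
  intro w u he hu
  rw [Set.mem_singleton_iff] at hu ⊢
  subst hu
  apply letterHom_eq_s a
  rw [he]
  simp [letterHom, FreeMonoid.lift_eval_of]

end Letter

/-! ### Products: union and difference -/

theorem aperiodic_prod {M N : Type*} [Monoid M] [Monoid N]
    (hM : Aperiodic M) (hN : Aperiodic N) : Aperiodic (M × N) := by
  intro x
  obtain ⟨n₁, h₁⟩ := hM x.1
  obtain ⟨n₂, h₂⟩ := hN x.2
  refine ⟨max n₁ n₂, ?_⟩
  have e1 : x.1 ^ (max n₁ n₂) = x.1 ^ (max n₁ n₂ + 1) := by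
    rw [pow_stab h₁ _ (le_max_left n₁ n₂), pow_stab h₁ _ ((le_max_left n₁ n₂).trans (Nat.le_succ _))]
  have e2 : x.2 ^ (max n₁ n₂) = x.2 ^ (max n₁ n₂ + 1) := by
    rw [pow_stab h₂ _ (le_max_right n₁ n₂),
      pow_stab h₂ _ ((le_max_right n₁ n₂).trans (Nat.le_succ _))]
  ext
  · simpa using e1
  · simpa using e2

theorem Recog.union {A : Type*} {K K' : Set (FreeMonoid A)} (h : Recog K) (h' : Recog K') :
    Recog (K ∪ K') := by
  obtain ⟨M, _, _, hap, φ, hφ⟩ := h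
  obtain ⟨N, _, _, hap', ψ, hψ⟩ := h'
  refine ⟨M × N, inferInstance, inferInstance, aperiodic_prod hap hap', φ.prod ψ, ?_⟩
  rw [recog_iff_sat] at hφ hψ ⊢
  intro w u he hu
  have he1 : φ w = φ u := congrArg Prod.fst he
  have he2 : ψ w = ψ u := congrArg Prod.snd he
  rcases hu with hu | hu
  · exact Or.inl (hφ w u he1 hu)
  · exact Or.inr (hψ w u he2 hu)

theorem Recog.diff {A : Type*} {K K' : Set (FreeMonoid A)} (h : Recog K) (h' : Recog K') :
    Recog (K \ K') := by
  obtain ⟨M, _, _, hap, φ, hφ⟩ := h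
  obtain ⟨N, _, _, hap', ψ, hψ⟩ := h'
  refine ⟨M × N, inferInstance, inferInstance, aperiodic_prod hap hap', φ.prod ψ, ?_⟩
  rw [recog_iff_sat] at hφ hψ ⊢
  intro w u he hu
  have he1 : φ w = φ u := congrArg Prod.fst he
  have he2 : ψ w = ψ u := congrArg Prod.snd he
  exact ⟨hφ w u he1 hu.1, fun hw => hu.2 (hψ u w he2.symm hw)⟩

theorem recog_full {A : Type*} : Recog (Set.univ : Set (FreeMonoid A)) := by
  refine ⟨PUnit, inferInstance, inferInstance, fun x => ⟨0, Subsingleton.elim _ _⟩, 1, ?_⟩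
  simp





/-! ### The Schützenberger product of two monoids -/

@[ext]
structure SP (M N : Type) [Monoid M] [Monoid N] where
  a : M
  S : Set (M × N)
  b : N

namespace SP

variable {M N : Type} [Monoid M] [Monoid N]

instance : Monoid (SP M N) where
  one := ⟨1, ∅, 1⟩
  mul x y := ⟨x.a * y.a,
    (fun p => (p.1, p.2 * y.b)) '' x.S ∪ (fun p => (x.a * p.1, p.2)) '' y.S,
    x.b * y.b⟩
  one_mul x := by
    refine SP.ext (one_mul _) ?_ (one_mul _)
    show (fun p => (p.1, p.2 * x.b)) '' (∅ : Set (M × N)) ∪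
      (fun p : M × N => ((1 : M) * p.1, p.2)) '' x.S = x.S
    simp
  mul_one x := by
    refine SP.ext (mul_one _) ?_ (mul_one _)
    show (fun p : M × N => (p.1, p.2 * (1 : N))) '' x.S ∪
      (fun p => (x.a * p.1, p.2)) '' (∅ : Set (M × N)) = x.S
    simp
  mul_assoc x y z := by
    refine SP.ext (mul_assoc _ _ _) ?_ (mul_assoc _ _ _)
    show (fun p : M × N => (p.1, p.2 * z.b)) ''
        ((fun p : M × N => (p.1, p.2 * y.b)) '' x.S ∪ (fun p => (x.a * p.1, p.2)) '' y.S)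
        ∪ (fun p : M × N => (x.a * y.a * p.1, p.2)) '' z.S =
      (fun p : M × N => (p.1, p.2 * (y.b * z.b))) '' x.S ∪
        (fun p : M × N => (x.a * p.1, p.2)) ''
          ((fun p : M × N => (p.1, p.2 * z.b)) '' y.S ∪ (fun p => (y.a * p.1, p.2)) '' z.S)
    simp only [Set.image_union, Set.image_image, mul_assoc, Set.union_assoc]

theorem mul_a (x y : SP M N) : (x * y).a = x.a * y.a := rfl
theorem mul_b (x y : SP M N) : (x * y).b = x.b * y.b := rfl
theorem mul_S (x y : SP M N) :
    (x * y).S = (fun p => (p.1, p.2 * y.b)) '' x.S ∪ (fun p => (x.a * p.1, p.2)) '' y.S := rfl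
theorem one_a : (1 : SP M N).a = 1 := rfl
theorem one_b : (1 : SP M N).b = 1 := rfl
theorem one_S : (1 : SP M N).S = ∅ := rfl

instance [Finite M] [Finite N] : Finite (SP M N) := by
  apply Finite.of_injective (fun x : SP M N => (x.a, x.S, x.b))
  intro x y h
  simp only [Prod.mk.injEq] at h
  exact SP.ext h.1 h.2.1 h.2.2

theorem pow_a (x : SP M N) (k : ℕ) : (x ^ k).a = x.a ^ k := by
  induction k with
  | zero => rw [pow_zero, pow_zero]; rfl
  | succ k ih => rw [pow_succ, pow_succ, mul_a, ih]

theorem pow_b (x : SP M N) (k : ℕ) : (x ^ k).b = x.b ^ k := by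
  induction k with
  | zero => rw [pow_zero, pow_zero]; rfl
  | succ k ih => rw [pow_succ, pow_succ, mul_b, ih]

theorem pow_S (x : SP M N) (k : ℕ) :
    (x ^ (k + 1)).S =
      ⋃ i ∈ Finset.range (k + 1), (fun p : M × N => (x.a ^ i * p.1, p.2 * x.b ^ (k - i))) '' x.S := by
  induction k with
  | zero =>
      rw [pow_one]
      ext p
      simp
  | succ k ih =>
      rw [pow_succ, mul_S, ih]
      ext p
      simp only [Set.image_union, Set.image_iUnion, Set.image_image, Set.mem_union,
        Set.mem_iUnion, Set.mem_image, Finset.mem_range, pow_a]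
      constructor
      · rintro (⟨i, hi, q, hq, rfl⟩ | ⟨q, hq, rfl⟩)
        · refine ⟨i, by omega, q, hq, ?_⟩
          have : k + 1 - i = (k - i) + 1 := by omega
          rw [this, pow_succ, mul_assoc]
        · exact ⟨k + 1, by omega, q, hq, by simp⟩
      · rintro ⟨i, hi, q, hq, rfl⟩
        rcases Nat.lt_or_ge i (k + 1) with hik | hik
        · refine Or.inl ⟨i, hik, q, hq, ?_⟩
          have : k + 1 - i = (k - i) + 1 := by omega
          rw [this, pow_succ, mul_assoc]
        · have : i = k + 1 := by omega
          subst this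
          exact Or.inr ⟨q, hq, by simp⟩

theorem aperiodic (hM : Aperiodic M) (hN : Aperiodic N) : Aperiodic (SP M N) := by
  intro x
  obtain ⟨n₁, h₁⟩ := hM x.a
  obtain ⟨n₂, h₂⟩ := hN x.b
  set n := max n₁ n₂ with hn
  have ha : ∀ m, n ≤ m → x.a ^ m = x.a ^ n := fun m hm => by
    rw [pow_stab h₁ m (le_trans (le_max_left _ _) hm), pow_stab h₁ n (le_max_left _ _)]
  have hb : ∀ m, n ≤ m → x.b ^ m = x.b ^ n := fun m hm => by
    rw [pow_stab h₂ m (le_trans (le_max_right _ _) hm), pow_stab h₂ n (le_max_right _ _)]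
  -- the stable value of the middle set
  set T : Set (M × N) :=
    (⋃ j ∈ Finset.range (n + 1), (fun p : M × N => (x.a ^ n * p.1, p.2 * x.b ^ j)) '' x.S) ∪
      (⋃ i ∈ Finset.range (n + 1), (fun p : M × N => (x.a ^ i * p.1, p.2 * x.b ^ n)) '' x.S)
    with hT
  have key : ∀ k, 2 * n + 1 ≤ k → (x ^ (k + 1)).S = T := by
    intro k hk
    rw [pow_S]
    ext p
    simp only [hT, Set.mem_iUnion, Set.mem_union, Set.mem_image, Finset.mem_range]
    constructor
    · rintro ⟨i, hi, q, hq, rfl⟩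
      rcases Nat.lt_or_ge i n with hin | hin
      · -- i < n, so k - i ≥ n
        have hkn : n ≤ k - i := by omega
        refine Or.inr ⟨i, by omega, q, hq, ?_⟩
        rw [hb _ hkn]
      · rcases Nat.lt_or_ge (k - i) n with hjn | hjn
        · refine Or.inl ⟨k - i, by omega, q, hq, ?_⟩
          rw [ha _ hin]
        · refine Or.inl ⟨n, by omega, q, hq, ?_⟩
          rw [ha _ hin, hb _ hjn]
    · rintro (⟨j, hj, q, hq, rfl⟩ | ⟨i, hi, q, hq, rfl⟩)
      · refine ⟨k - j, by omega, q, hq, ?_⟩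
        have h1 : n ≤ k - j := by omega
        have h2 : k - (k - j) = j := by omega
        rw [ha _ h1, h2]
      · refine ⟨i, by omega, q, hq, ?_⟩
        have h1 : n ≤ k - i := by omega
        rw [hb _ h1]
  refine ⟨2 * n + 2, ?_⟩
  have e1 : 2 * n + 2 = (2 * n + 1) + 1 := rfl
  have e2 : 2 * n + 3 = (2 * n + 2) + 1 := rfl
  refine SP.ext ?_ ?_ ?_
  · rw [pow_a, pow_a, ha (2 * n + 2) (by omega), ha (2 * n + 2 + 1) (by omega)]
  · rw [e1, key _ (by omega)]
    rw [show (2 * n + 2) + 1 = (2 * n + 2) + 1 from rfl, key (2 * n + 2) (by omega)]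
  · rw [pow_b, pow_b, hb (2 * n + 2) (by omega), hb (2 * n + 2 + 1) (by omega)]

end SP

/-! ### The splitting homomorphism into the Schützenberger product -/

section Tau

variable {A : Type*} {M N : Type} [Monoid M] [Monoid N]

def splits (φ₁ : FreeMonoid A →* M) (φ₂ : FreeMonoid A →* N) (w : FreeMonoid A) : Set (M × N) :=
  {pr | ∃ u v : FreeMonoid A, u * v = w ∧ v ≠ 1 ∧ pr = (φ₁ u, φ₂ v)}

theorem freeMonoid_mul_eq_mul {u v w₁ w₂ : FreeMonoid A} (h : u * v = w₁ * w₂) :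
    (∃ t, w₁ = u * t ∧ v = t * w₂) ∨ (∃ t, u = w₁ * t ∧ w₂ = t * v) := by
  have h' : u.toList ++ v.toList = w₁.toList ++ w₂.toList := congrArg toList h
  rcases List.append_eq_append_iff.mp h' with ⟨t, ht1, ht2⟩ | ⟨t, ht1, ht2⟩
  · exact Or.inl ⟨ofList t, toList.injective (by simpa using ht1),
      toList.injective (by simpa using ht2)⟩
  · exact Or.inr ⟨ofList t, toList.injective (by simpa using ht1),
      toList.injective (by simpa using ht2)⟩

def tau (φ₁ : FreeMonoid A →* M) (φ₂ : FreeMonoid A →* N) : FreeMonoid A →* SP M N where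
  toFun w := ⟨φ₁ w, splits φ₁ φ₂ w, φ₂ w⟩
  map_one' := by
    refine SP.ext (map_one φ₁) ?_ (map_one φ₂)
    show splits φ₁ φ₂ 1 = ∅
    ext p
    simp only [splits, Set.mem_setOf_eq, Set.mem_empty_iff_false, iff_false]
    rintro ⟨u, v, huv, hv, rfl⟩
    have : u.toList ++ v.toList = [] := congrArg toList huv
    exact hv (toList.injective (List.append_eq_nil_iff.mp this).2)
  map_mul' w₁ w₂ := by
    refine SP.ext (map_mul φ₁ _ _) ?_ (map_mul φ₂ _ _)
    show splits φ₁ φ₂ (w₁ * w₂) =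
      (fun p : M × N => (p.1, p.2 * φ₂ w₂)) '' splits φ₁ φ₂ w₁ ∪
        (fun p : M × N => (φ₁ w₁ * p.1, p.2)) '' splits φ₁ φ₂ w₂
    ext p
    simp only [splits, Set.mem_setOf_eq, Set.mem_union, Set.mem_image]
    constructor
    · rintro ⟨u, v, huv, hv, rfl⟩
      rcases freeMonoid_mul_eq_mul huv with ⟨t, ht1, ht2⟩ | ⟨t, ht1, ht2⟩
      · rcases eq_or_ne t 1 with rfl | htne
        · -- u = w₁, v = w₂
          rw [mul_one] at ht1
          rw [one_mul] at ht2
          refine Or.inr ⟨(1, φ₂ v), ⟨1, v, by rw [one_mul, ht2], hv, by simp⟩, ?_⟩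
          simp [ht1]
        · refine Or.inl ⟨(φ₁ u, φ₂ t), ⟨u, t, ht1.symm, htne, rfl⟩, ?_⟩
          simp [ht2, map_mul]
      · refine Or.inr ⟨(φ₁ t, φ₂ v), ⟨t, v, ht2.symm, hv, rfl⟩, ?_⟩
        simp [ht1, map_mul]
    · rintro (⟨q, ⟨u, v, huv, hv, rfl⟩, rfl⟩ | ⟨q, ⟨u, v, huv, hv, rfl⟩, rfl⟩)
      · refine ⟨u, v * w₂, by rw [← mul_assoc, huv], ?_, by simp [map_mul]⟩
        intro hc
        have : (v.toList ++ w₂.toList) = [] := congrArg toList hc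
        exact hv (toList.injective (List.append_eq_nil_iff.mp this).1)
      · exact ⟨w₁ * u, v, by rw [mul_assoc, huv], hv, by simp [map_mul]⟩

theorem tau_recog {K K' : Set (FreeMonoid A)} (φ₁ : FreeMonoid A →* M) (φ₂ : FreeMonoid A →* N)
    (h₁ : ∀ w u, φ₁ w = φ₁ u → u ∈ K → w ∈ K) (h₂ : ∀ w u, φ₂ w = φ₂ u → u ∈ K' → w ∈ K') :
    ∀ w u, tau φ₁ φ₂ w = tau φ₁ φ₂ u → u ∈ Lang.cat K K' → w ∈ Lang.cat K K' := by
  intro w u he hu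
  obtain ⟨u₁, hu₁, u₂, hu₂, rfl⟩ := hu
  have heS : splits φ₁ φ₂ w = splits φ₁ φ₂ (u₁ * u₂) := congrArg SP.S he
  have hea : φ₁ w = φ₁ (u₁ * u₂) := congrArg SP.a he
  rcases eq_or_ne u₂ 1 with rfl | hne
  · -- u₂ empty: w itself lands in K
    have : φ₁ w = φ₁ u₁ := by rw [hea, mul_one]
    exact ⟨w, h₁ w u₁ this hu₁, 1, hu₂, (mul_one w).symm⟩
  · have hmem : (φ₁ u₁, φ₂ u₂) ∈ splits φ₁ φ₂ (u₁ * u₂) := ⟨u₁, u₂, rfl, hne, rfl⟩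
    rw [← heS] at hmem
    obtain ⟨v₁, v₂, hv, hvne, hpq⟩ := hmem
    have e1 : φ₁ v₁ = φ₁ u₁ := (congrArg Prod.fst hpq).symm
    have e2 : φ₂ v₂ = φ₂ u₂ := (congrArg Prod.snd hpq).symm
    exact ⟨v₁, h₁ v₁ u₁ e1 hu₁, v₂, h₂ v₂ u₂ e2 hu₂, hv.symm⟩

end Tau




section Syntactic

variable {A : Type*} (L : Set (FreeMonoid A))

theorem syntactic_sat :
    (Con.mk' (syntacticCon L)) ⁻¹' ((Con.mk' (syntacticCon L)) '' L) = L := by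
  rw [recog_iff_sat]
  intro w u he hu
  have hc : syntacticCon L w u := (Con.eq _).mp he
  have := (hc 1 1).mpr (by simpa using hu)
  simpa using this

theorem recog_to_syntactic (h : Recog L) :
    Finite (syntacticCon L).Quotient ∧ Aperiodic (syntacticCon L).Quotient := by
  classical
  obtain ⟨M, _, _, hap, φ, hφ⟩ := h
  rw [recog_iff_sat] at hφ
  have key : ∀ u v : FreeMonoid A, φ u = φ v → syntacticCon L u v := by
    intro u v he p q
    constructor
    · intro hm
      exact hφ (p * v * q) (p * u * q) (by simp only [map_mul, he]) hm
    · intro hm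
      exact hφ (p * u * q) (p * v * q) (by simp only [map_mul, he]) hm
  constructor
  · apply Finite.of_surjective
      (f := fun m : Set.range (⇑φ) => Con.mk' (syntacticCon L) m.2.choose)
    intro q
    obtain ⟨w, rfl⟩ := Con.mk'_surjective q
    refine ⟨⟨φ w, ⟨w, rfl⟩⟩, ?_⟩
    exact (Con.eq _).mpr (key _ _ (Exists.choose_spec (⟨w, rfl⟩ : ∃ u, φ u = φ w)))
  · intro x
    induction x using Con.induction_on with
    | H w =>
      obtain ⟨n, hn⟩ := hap (φ w)
      refine ⟨n, ?_⟩
      have : Con.mk' (syntacticCon L) (w ^ n) = Con.mk' (syntacticCon L) (w ^ (n + 1)) :=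
        (Con.eq _).mpr (key _ _ (by rw [map_pow, map_pow, hn]))
      simpa [map_pow] using this

theorem syntactic_to_recog (hfin : Finite (syntacticCon L).Quotient)
    (hap : Aperiodic (syntacticCon L).Quotient) : Recog L := by
  have hsmall : Small.{0} (syntacticCon L).Quotient := Countable.toSmall _
  let e : Shrink (syntacticCon L).Quotient ≃* (syntacticCon L).Quotient := Shrink.mulEquiv
  refine ⟨Shrink (syntacticCon L).Quotient, inferInstance,
    Finite.of_equiv _ (equivShrink _), ?_, ?_⟩
  · intro x
    obtain ⟨n, hn⟩ := hap (e x)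
    refine ⟨n, e.injective ?_⟩
    rw [map_pow, map_pow, hn]
  · refine ⟨(e.symm.toMonoidHom).comp (Con.mk' (syntacticCon L)), ?_⟩
    rw [recog_iff_sat]
    intro w u he hu
    simp only [MonoidHom.comp_apply, MulEquiv.coe_toMonoidHom] at he
    have he' : Con.mk' (syntacticCon L) w = Con.mk' (syntacticCon L) u := e.symm.injective he
    have hc : syntacticCon L w u := (Con.eq _).mp he'
    have := (hc 1 1).mpr (by simpa using hu)
    simpa using this

end Syntactic





/-! ### Local divisors -/

section helpers

variable {M : Type*} [Monoid M] {x ya yb sa ta sb tb s s' : M}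

theorem comp_left (h1 : ya = sa * x) (h2 : ya = x * ta) (h3 : yb = x * tb) :
    sa * yb = x * (ta * tb) := by
  subst h3
  rw [← mul_assoc, ← h1, h2, mul_assoc]

theorem comp_right (h3 : yb = sb * x) : sa * yb = (sa * sb) * x := by
  subst h3
  rw [mul_assoc]

theorem val_eq (h1 : ya = s * x) (h1' : ya = s' * x) (h3 : yb = x * tb) :
    s * yb = s' * yb := by
  subst h3
  rw [← mul_assoc, ← h1, h1', mul_assoc]

end helpers

def LDc {M : Type*} [Monoid M] (x : M) : Type _ :=
  {y : M // (∃ t, y = x * t) ∧ (∃ s, y = s * x)}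

namespace LDc

variable {M : Type*} [Monoid M] {x : M}

noncomputable def ldone : LDc x := ⟨x, ⟨1, (mul_one x).symm⟩, ⟨1, (one_mul x).symm⟩⟩

noncomputable def ldmul (a b : LDc x) : LDc x :=
  ⟨a.2.2.choose * b.1,
    ⟨a.2.1.choose * b.2.1.choose,
      comp_left a.2.2.choose_spec a.2.1.choose_spec b.2.1.choose_spec⟩,
    ⟨a.2.2.choose * b.2.2.choose, comp_right b.2.2.choose_spec⟩⟩

theorem ldmul_val (a b : LDc x) {s : M} (hs : a.1 = s * x) : (ldmul a b).1 = s * b.1 := by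
  obtain ⟨tb, htb⟩ := b.2.1
  exact val_eq a.2.2.choose_spec hs htb

theorem ldmul_val' (a b : LDc x) {sa sb : M} (hsa : a.1 = sa * x) (hsb : b.1 = sb * x) :
    (ldmul a b).1 = (sa * sb) * x := by
  rw [ldmul_val a b hsa]
  exact comp_right hsb

noncomputable instance : Monoid (LDc x) where
  one := ldone
  mul := ldmul
  one_mul a := by
    apply Subtype.ext
    have h : (ldone : LDc x).1 = 1 * x := (one_mul x).symm
    show (ldmul ldone a).1 = a.1
    rw [ldmul_val ldone a h, one_mul]
  mul_one a := by
    apply Subtype.ext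
    obtain ⟨sa, hsa⟩ := a.2.2
    show (ldmul a ldone).1 = a.1
    rw [ldmul_val a ldone hsa]
    exact hsa.symm
  mul_assoc a b c := by
    apply Subtype.ext
    obtain ⟨sa, hsa⟩ := a.2.2
    obtain ⟨sb, hsb⟩ := b.2.2
    have h1 : (ldmul a b).1 = (sa * sb) * x := ldmul_val' a b hsa hsb
    have h2 : (ldmul b c).1 = sb * c.1 := ldmul_val b c hsb
    show (ldmul (ldmul a b) c).1 = (ldmul a (ldmul b c)).1
    rw [ldmul_val (ldmul a b) c h1, ldmul_val a (ldmul b c) hsa, h2, mul_assoc]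

theorem one_val : ((1 : LDc x)).1 = x := rfl

theorem mul_val (a b : LDc x) {s : M} (hs : a.1 = s * x) : (a * b : LDc x).1 = s * b.1 :=
  ldmul_val a b hs

instance [Finite M] : Finite (LDc x) :=
  inferInstanceAs (Finite {y : M // (∃ t, y = x * t) ∧ (∃ s, y = s * x)})

theorem pow_val (a : LDc x) (t : M) (ht : a.1 = x * t) :
    ∀ k, ((a ^ (k + 1) : LDc x)).1 = a.1 * t ^ k := by
  intro k
  induction k with
  | zero => rw [pow_one, pow_zero, mul_one]
  | succ k ih =>
      obtain ⟨sa, hsa⟩ := a.2.2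
      have hstep : a ^ (k + 2) = a * a ^ (k + 1) := by rw [← pow_succ']
      rw [hstep, mul_val a _ hsa, ih, ht]
      calc sa * (x * t * t ^ k) = (sa * x) * (t * t ^ k) := by simp only [mul_assoc]
        _ = a.1 * t ^ (k + 1) := by rw [← hsa, ← pow_succ']
        _ = x * t * t ^ (k + 1) := by rw [ht]

theorem aperiodic (hM : Aperiodic M) : Aperiodic (LDc x) := by
  intro a
  obtain ⟨t, ht⟩ := a.2.1
  obtain ⟨n, hn⟩ := hM t
  refine ⟨n + 1, Subtype.ext ?_⟩
  rw [pow_val a t ht, pow_val a t ht, hn]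

theorem card_lt [Finite M] (hM : Aperiodic M) (hx : x ≠ 1) :
    Nat.card (LDc x) < Nat.card M := by
  classical
  have := Fintype.ofFinite M
  have hone : ¬((∃ t, (1 : M) = x * t) ∧ (∃ s, (1 : M) = s * x)) := by
    rintro ⟨⟨t, ht⟩, ⟨s, hs⟩⟩
    apply hx
    have hst : s = t := by
      calc s = s * 1 := (mul_one s).symm
        _ = s * (x * t) := by rw [← ht]
        _ = (s * x) * t := by rw [mul_assoc]
        _ = 1 * t := by rw [← hs]
        _ = t := one_mul t
    obtain ⟨n, hn⟩ := hM x
    have hpow : ∀ k, x ^ k * t ^ k = 1 := by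
      intro k
      induction k with
      | zero => simp
      | succ k ih =>
          calc x ^ (k + 1) * t ^ (k + 1) = (x ^ k * x) * (t * t ^ k) := by
                rw [pow_succ, pow_succ']
            _ = x ^ k * ((x * t) * t ^ k) := by simp only [mul_assoc]
            _ = x ^ k * t ^ k := by rw [← ht, one_mul]
            _ = 1 := ih
    calc x = x * 1 := (mul_one x).symm
      _ = x * (x ^ n * t ^ n) := by rw [hpow n]
      _ = x ^ (n + 1) * t ^ n := by rw [← mul_assoc, ← pow_succ']
      _ = x ^ n * t ^ n := by rw [← hn]
      _ = 1 := hpow n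
  show Nat.card {y : M // (∃ t, y = x * t) ∧ (∃ s, y = s * x)} < Nat.card M
  rw [Nat.card_eq_fintype_card, Nat.card_eq_fintype_card]
  exact Fintype.card_subtype_lt (x := (1 : M)) hone

end LDc

/-- The homomorphism from the free monoid over `M` into the local divisor. -/
noncomputable def theta {M : Type*} [Monoid M] (x : M) : FreeMonoid M →* LDc x :=
  FreeMonoid.lift (fun g => ⟨x * g * x, ⟨g * x, by rw [mul_assoc]⟩, ⟨x * g, rfl⟩⟩)

theorem theta_one_val {M : Type*} [Monoid M] (x : M) : (theta x 1).1 = x := by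
  rw [map_one]; rfl

theorem theta_cons {M : Type*} [Monoid M] (x : M) (g : M) (l : FreeMonoid M) :
    (theta x (FreeMonoid.of g * l)).1 = x * g * (theta x l).1 := by
  rw [map_mul]
  exact LDc.mul_val _ _ (show (theta x (FreeMonoid.of g)).1 = (x * g) * x from rfl)





section Sig

variable {A : Type*} {M : Type*} [Monoid M]

/-- Words that are concatenations of blocks `u · c` with `u` free of `c`. -/
inductive okD (c : A) : List A → Prop
  | nil : okD c []
  | cons (u rest : List A) : c ∉ u → okD c rest → okD c (u ++ c :: rest)

variable [DecidableEq A]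

/-- `sigAux c φ acc w` computes the list of `φ`-values of the `c`-separated blocks of
`acc.reverse ++ w`. -/
def sigAux (c : A) (φ : FreeMonoid A →* M) : List A → List A → List M
  | _, [] => []
  | acc, a :: t => if a = c then φ (ofList acc.reverse) :: sigAux c φ [] t
      else sigAux c φ (a :: acc) t

def sig (c : A) (φ : FreeMonoid A →* M) (w : List A) : List M := sigAux c φ [] w

theorem sigAux_eq (c : A) (φ : FreeMonoid A →* M) :
    ∀ (u acc rest : List A), c ∉ u →
      sigAux c φ acc (u ++ c :: rest) = φ (ofList (acc.reverse ++ u)) :: sig c φ rest := by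
  intro u
  induction u with
  | nil =>
      intro acc rest _
      simp [sigAux, sig]
  | cons b u' ih =>
      intro acc rest hmem
      have hb : b ≠ c := fun h => hmem (by simp [h])
      have hmem' : c ∉ u' := fun h => hmem (List.mem_cons_of_mem b h)
      show sigAux c φ acc (b :: (u' ++ c :: rest)) = _
      rw [show sigAux c φ acc (b :: (u' ++ c :: rest)) =
        if b = c then φ (ofList acc.reverse) :: sigAux c φ [] (u' ++ c :: rest)
          else sigAux c φ (b :: acc) (u' ++ c :: rest) from rfl,
        if_neg hb, ih (b :: acc) rest hmem']
      simp

theorem sig_nil (c : A) (φ : FreeMonoid A →* M) : sig c φ [] = [] := rfl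

theorem sig_cons (c : A) (φ : FreeMonoid A →* M) (u rest : List A) (hu : c ∉ u) :
    sig c φ (u ++ c :: rest) = φ (ofList u) :: sig c φ rest := by
  rw [sig, sigAux_eq c φ u [] rest hu]
  simp

theorem sig_append (c : A) (φ : FreeMonoid A →* M) {w₁ w₂ : List A}
    (h₁ : okD c w₁) (h₂ : okD c w₂) :
    sig c φ (w₁ ++ w₂) = sig c φ w₁ ++ sig c φ w₂ := by
  induction h₁ with
  | nil => simp [sig_nil]
  | cons u rest hu _ ih =>
      rw [List.append_assoc, List.cons_append, sig_cons c φ u _ hu, sig_cons c φ u rest hu, ih]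
      simp

theorem okD_append {c : A} {w₁ w₂ : List A} (h₁ : okD c w₁) (h₂ : okD c w₂) :
    okD c (w₁ ++ w₂) := by
  induction h₁ with
  | nil => simpa
  | cons u rest hu _ ih =>
      rw [List.append_assoc, List.cons_append]
      exact okD.cons u _ hu ih

theorem sig_eq_nil {c : A} {φ : FreeMonoid A →* M} {w : List A} (h : okD c w)
    (hs : sig c φ w = []) : w = [] := by
  cases h with
  | nil => rfl
  | cons u rest hu _ => rw [sig_cons c φ u rest hu] at hs; exact absurd hs (by simp)

theorem sig_singleton {c : A} {φ : FreeMonoid A →* M} {w : List A} {g : M} (h : okD c w)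
    (hs : sig c φ w = [g]) : ∃ u, c ∉ u ∧ φ (ofList u) = g ∧ w = u ++ [c] := by
  cases h with
  | nil => rw [sig_nil] at hs; exact absurd hs (by simp)
  | cons u rest hu hrest =>
      rw [sig_cons c φ u rest hu] at hs
      have h1 : φ (ofList u) = g := (List.cons_eq_cons.mp hs).1
      have h2 : rest = [] := sig_eq_nil hrest (List.cons_eq_cons.mp hs).2
      exact ⟨u, hu, h1, by rw [h2]⟩

theorem sig_split {c : A} {φ : FreeMonoid A →* M} {w : List A} (h : okD c w) :
    ∀ l₁ l₂, sig c φ w = l₁ ++ l₂ →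
      ∃ w₁ w₂, okD c w₁ ∧ okD c w₂ ∧ w = w₁ ++ w₂ ∧ sig c φ w₁ = l₁ ∧ sig c φ w₂ = l₂ := by
  induction h with
  | nil =>
      intro l₁ l₂ hs
      rw [sig_nil] at hs
      obtain ⟨h1, h2⟩ := List.append_eq_nil_iff.mp hs.symm
      exact ⟨[], [], okD.nil, okD.nil, rfl, by rw [sig_nil, h1], by rw [sig_nil, h2]⟩
  | cons u rest hu hrest ih =>
      intro l₁ l₂ hs
      rw [sig_cons c φ u rest hu] at hs
      cases l₁ with
      | nil =>
          exact ⟨[], u ++ c :: rest, okD.nil, okD.cons u rest hu hrest, rfl, sig_nil c φ,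
            by rw [sig_cons c φ u rest hu]; simpa using hs⟩
      | cons g l₁' =>
          simp only [List.cons_append, List.cons_eq_cons] at hs
          obtain ⟨hg, hrest'⟩ := hs
          obtain ⟨r₁, r₂, hok₁, hok₂, hre, hs₁, hs₂⟩ := ih l₁' l₂ hrest'
          refine ⟨u ++ c :: r₁, r₂, okD.cons u r₁ hu hok₁, hok₂, ?_, ?_, hs₂⟩
          · rw [hre]; simp
          · rw [sig_cons c φ u r₁ hu, hs₁, hg]

theorem first_split {c : A} {w : List A} (h : c ∈ w) :
    ∃ u t, c ∉ u ∧ w = u ++ c :: t := by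
  induction w with
  | nil => exact absurd h (by simp)
  | cons a w' ih =>
      by_cases ha : a = c
      · exact ⟨[], w', by simp, by rw [ha]; rfl⟩
      · have h' : c ∈ w' := by
          rcases List.mem_cons.mp h with h1 | h1
          · exact absurd h1.symm ha
          · exact h1
        obtain ⟨u, t, hu, ht⟩ := ih h'
        refine ⟨a :: u, t, ?_, by rw [ht]; rfl⟩
        intro hmem
        rcases List.mem_cons.mp hmem with h1 | h1
        · exact ha h1.symm
        · exact hu h1

/-- every word ending with `c` is `okD` -/
theorem okD_concat {c : A} : ∀ (n : ℕ) (w : List A), w.length ≤ n →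
    ∀ u, w = u ++ [c] → okD c w := by
  intro n
  induction n with
  | zero =>
      intro w hw u hend
      rw [hend] at hw; simp at hw
  | succ n ih =>
      intro w hw u hend
      have hc : c ∈ w := by rw [hend]; simp
      obtain ⟨u₀, t, hu₀, ht⟩ := first_split hc
      rcases List.append_eq_append_iff.mp (hend.symm.trans ht : u ++ [c] = u₀ ++ c :: t) with
        ⟨a', ha1, ha2⟩ | ⟨c', hc1, hc2⟩
      · -- [c] = a' ++ c :: t forces t = []
        have ht0 : t = [] := by
          have hlen := congrArg List.length ha2
          simp at hlen
          have : t.length = 0 := by omega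
          exact List.eq_nil_of_length_eq_zero this
        rw [ht, ht0]
        exact okD.cons u₀ [] hu₀ okD.nil
      · -- c :: t = c' ++ [c]
        cases c' with
        | nil =>
            have : t = [] := by simpa using (List.cons_eq_cons.mp hc2.symm).2
            rw [ht, this]
            exact okD.cons u₀ [] hu₀ okD.nil
        | cons b c'' =>
            have hbt : c :: t = b :: (c'' ++ [c]) := by simpa using hc2
            have ht' : t = c'' ++ [c] := (List.cons_eq_cons.mp hbt).2
            have hlen : t.length ≤ n := by
              have := congrArg List.length ht
              simp at this
              omega
            rw [ht]
            exact okD.cons u₀ t hu₀ (ih t hlen c'' ht')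

theorem tail_split {c : A} : ∀ (y : List A), ∃ z v, okD c z ∧ c ∉ v ∧ y = z ++ v := by
  intro y
  induction y with
  | nil => exact ⟨[], [], okD.nil, by simp, rfl⟩
  | cons a y' ih =>
      obtain ⟨z', v', hz', hv', hy'⟩ := ih
      by_cases hcy : c ∈ a :: y'
      · by_cases hcy' : c ∈ y'
        · -- z' must be nonempty
          have hz'ne : z' ≠ [] := by
            intro h
            rw [h] at hy'
            simp at hy'
            exact hv' (hy' ▸ hcy')
          -- a :: z' is okD since z' is okD and nonempty
          have hok : okD c (a :: z') := by
            by_cases hac : a = c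
            · subst hac
              exact okD.cons [] z' (by simp) hz'
            · cases hz' with
              | nil => exact absurd rfl hz'ne
              | cons u rest hu hrest =>
                  have hnotin : c ∉ a :: u := by
                    intro h
                    rcases List.mem_cons.mp h with h1 | h1
                    · exact hac h1.symm
                    · exact hu h1
                  exact okD.cons (a :: u) rest hnotin hrest
          exact ⟨a :: z', v', hok, hv', by rw [hy']; rfl⟩
        · have ha : a = c := by
            rcases List.mem_cons.mp hcy with h | h
            · exact h.symm
            · exact absurd h hcy'
          exact ⟨[c], y', okD.cons [] [] (by simp) okD.nil, hcy', by rw [ha]; rfl⟩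
      · exact ⟨[], a :: y', okD.nil, hcy, rfl⟩

end Sig


/-! ### Part D3 : the main induction for the hard direction -/

section Main

theorem theta_sig {A : Type*} {M : Type*} [DecidableEq A] [Monoid M]
    (φ : FreeMonoid A →* M) (c : A) {w : List A} (h : okD c w) :
    (theta (φ (of c)) (ofList (sig c φ w))).1 = φ (of c) * φ (ofList w) := by
  induction h with
  | nil =>
      rw [sig_nil]
      show (theta (φ (of c)) 1).1 = _
      rw [theta_one_val]
      simp
  | cons u rest hu hrest ih =>
      rw [sig_cons c φ u rest hu, ofList_cons, theta_cons, ih]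
      have : ofList (u ++ c :: rest) = ofList u * of c * ofList rest := by
        simp [ofList_append, mul_assoc]
      rw [this]
      simp only [map_mul, mul_assoc]

theorem okD_ends {A : Type*} {c : A} {w : List A} (h : okD c w) :
    w = [] ∨ ∃ u, w = u ++ [c] := by
  induction h with
  | nil => exact Or.inl rfl
  | cons u rest hu hrest ih =>
      right
      rcases ih with rfl | ⟨r, rfl⟩
      · exact ⟨u, rfl⟩
      · exact ⟨u ++ c :: r, by simp⟩

theorem SF_okD {A : Type*} [Finite A] (c : A) : SF {w : FreeMonoid A | okD c w.toList} := by
  classical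
  have heq : {w : FreeMonoid A | okD c w.toList} =
      {1} ∪ Lang.cat Set.univ {FreeMonoid.of c} := by
    ext w
    simp only [Set.mem_setOf_eq, Set.mem_union, Set.mem_singleton_iff, Lang.cat,
      Set.mem_univ, true_and]
    constructor
    · intro h
      rcases okD_ends h with h0 | ⟨u, hu⟩
      · left; exact toList.injective (by simp [h0])
      · right
        exact ⟨ofList u, ⟨of c, rfl, toList.injective (by simp [hu])⟩⟩
    · rintro (rfl | ⟨u, v, hv, rfl⟩)
      · exact okD.nil
      · subst hv
        have hend : (u * of c).toList = u.toList ++ [c] := by simp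
        exact okD_concat (u * of c).toList.length _ le_rfl u.toList hend
  rw [heq]
  exact SF.one.union (SF.full.concat (SF.letter c))

theorem sig_transfer {A : Type} [Finite A] [DecidableEq A] {M : Type} [Monoid M]
    (φ : FreeMonoid A →* M) (c : A)
    (hK : ∀ g : M, SF {w : FreeMonoid A | φ w = g ∧ c ∉ w.toList})
    {P : Set (FreeMonoid M)} (hP : SF P) :
    SF {w : FreeMonoid A | okD c w.toList ∧ ofList (sig c φ w.toList) ∈ P} := by
  induction hP with
  | full =>
      have : {w : FreeMonoid A | okD c w.toList ∧ ofList (sig c φ w.toList) ∈ Set.univ} =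
          {w : FreeMonoid A | okD c w.toList} := by
        ext w; simp
      rw [this]
      exact SF_okD c
  | letter g =>
      have : {w : FreeMonoid A | okD c w.toList ∧
            ofList (sig c φ w.toList) ∈ ({FreeMonoid.of g} : Set (FreeMonoid M))} =
          Lang.cat {w : FreeMonoid A | φ w = g ∧ c ∉ w.toList} {FreeMonoid.of c} := by
        ext w
        simp only [Set.mem_setOf_eq, Set.mem_singleton_iff, Lang.cat]
        constructor
        · rintro ⟨hok, hsig⟩
          have hsig' : sig c φ w.toList = [g] := by
            have := congrArg toList hsig
            simpa using this
          obtain ⟨u, hu, hφu, hw⟩ := sig_singleton hok hsig'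
          refine ⟨ofList u, ⟨by simpa using hφu, by simpa using hu⟩, of c,
            Set.mem_singleton _, toList.injective (by simpa using hw)⟩
        · rintro ⟨u, ⟨hφu, hcu⟩, v, hv, rfl⟩
          subst hv
          have htl : (u * of c).toList = u.toList ++ c :: [] := by simp
          constructor
          · exact okD_concat _ _ le_rfl u.toList (by simpa using htl)
          · rw [htl, sig_cons c φ u.toList [] hcu, sig_nil]
            have : φ (ofList u.toList) = g := by simpa using hφu
            rw [this]
            rfl
      rw [this]
      exact (hK g).concat (SF.letter c)
  | @union P1 P2 h1 h2 ih1 ih2 =>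
      have : {w : FreeMonoid A | okD c w.toList ∧ ofList (sig c φ w.toList) ∈ P1 ∪ P2} =
          {w : FreeMonoid A | okD c w.toList ∧ ofList (sig c φ w.toList) ∈ P1} ∪
          {w : FreeMonoid A | okD c w.toList ∧ ofList (sig c φ w.toList) ∈ P2} := by
        ext w
        simp only [Set.mem_setOf_eq, Set.mem_union]
        tauto
      rw [this]
      exact ih1.union ih2
  | @diff P1 P2 h1 h2 ih1 ih2 =>
      have : {w : FreeMonoid A | okD c w.toList ∧ ofList (sig c φ w.toList) ∈ P1 \ P2} =
          {w : FreeMonoid A | okD c w.toList ∧ ofList (sig c φ w.toList) ∈ P1} \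
          {w : FreeMonoid A | okD c w.toList ∧ ofList (sig c φ w.toList) ∈ P2} := by
        ext w
        simp only [Set.mem_setOf_eq, Set.mem_diff]
        tauto
      rw [this]
      exact ih1.diff ih2
  | @concat P1 P2 h1 h2 ih1 ih2 =>
      have : {w : FreeMonoid A | okD c w.toList ∧ ofList (sig c φ w.toList) ∈ Lang.cat P1 P2} =
          Lang.cat {w : FreeMonoid A | okD c w.toList ∧ ofList (sig c φ w.toList) ∈ P1}
            {w : FreeMonoid A | okD c w.toList ∧ ofList (sig c φ w.toList) ∈ P2} := by
        ext w
        simp only [Set.mem_setOf_eq, Lang.cat]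
        constructor
        · rintro ⟨hok, p, hp, q, hq, hpq⟩
          have hsplit : sig c φ w.toList = p.toList ++ q.toList := by
            have := congrArg toList hpq
            simpa using this
          obtain ⟨w₁, w₂, hok₁, hok₂, hw, hs₁, hs₂⟩ := sig_split hok _ _ hsplit
          refine ⟨ofList w₁, ⟨by simpa using hok₁, ?_⟩, ofList w₂, ⟨by simpa using hok₂, ?_⟩,
            toList.injective (by simpa using hw)⟩
          · have : sig c φ (ofList w₁).toList = p.toList := by simpa using hs₁
            rw [this]
            simpa using hp
          · have : sig c φ (ofList w₂).toList = q.toList := by simpa using hs₂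
            rw [this]
            simpa using hq
        · rintro ⟨u, ⟨hoku, hu⟩, v, ⟨hokv, hv⟩, rfl⟩
          have htl : (u * v).toList = u.toList ++ v.toList := by simp
          constructor
          · rw [htl]; exact okD_append hoku hokv
          · rw [htl, sig_append c φ hoku hokv, ofList_append]
            exact ⟨_, hu, _, hv, rfl⟩
      rw [this]
      exact ih1.concat ih2

theorem main0 (n : ℕ) : ∀ (M : Type) [Monoid M] [Finite M], Aperiodic M → Nat.card M ≤ n →
    ∀ (k : ℕ) (A : Type) [Finite A] (φ : FreeMonoid A →* M),
      Nat.card {a : A // φ (FreeMonoid.of a) ≠ 1} ≤ k → ∀ m : M, SF (φ ⁻¹' {m}) := by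
  induction n with
  | zero =>
      intro M _ _ _ hcard
      have : 0 < Nat.card M := Nat.card_pos
      omega
  | succ n ihn =>
      intro M instM instF hap hcard k
      induction k with
      | zero =>
          intro A instA φ hk m
          have hall : ∀ a : A, φ (of a) = 1 := by
            intro a
            by_contra ha
            have : 0 < Nat.card {a : A // φ (FreeMonoid.of a) ≠ 1} :=
              Nat.card_pos_iff.mpr ⟨⟨⟨a, ha⟩⟩, inferInstance⟩
            omega
          have hφ1 : ∀ w, φ w = 1 := by
            have : φ = (1 : FreeMonoid A →* M) := FreeMonoid.hom_eq (fun a => by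
              rw [hall a]; rfl)
            intro w
            rw [this]
            rfl
          by_cases hm : m = 1
          · have : φ ⁻¹' {m} = Set.univ := by
              ext w; simp [hφ1, hm]
            rw [this]
            exact SF.full
          · have : φ ⁻¹' {m} = ∅ := by
              ext w; simp [hφ1]; exact fun h => hm h.symm
            rw [this]
            exact SF.empty
      | succ k ihk =>
          intro A instA φ hk m
          have : DecidableEq A := Classical.decEq A
          by_cases hsmall : Nat.card {a : A // φ (FreeMonoid.of a) ≠ 1} ≤ k
          · exact ihk A φ hsmall m
          · -- there is a letter c with x = φ c ≠ 1
            have hne : Nonempty {a : A // φ (FreeMonoid.of a) ≠ 1} := by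
              by_contra hempty
              have : IsEmpty {a : A // φ (FreeMonoid.of a) ≠ 1} := not_nonempty_iff.mp hempty
              rw [Nat.card_of_isEmpty] at hsmall
              omega
            obtain ⟨⟨c, hx⟩⟩ := hne
            -- the hom that kills c
            set φ' : FreeMonoid A →* M :=
              FreeMonoid.lift (fun a => if a = c then 1 else φ (of a)) with hφ'def
            have hφ'c : φ' (of c) = 1 := by
              simp [hφ'def, FreeMonoid.lift_eval_of]
            have hφ'a : ∀ a, a ≠ c → φ' (of a) = φ (of a) := by
              intro a ha
              simp [hφ'def, FreeMonoid.lift_eval_of, ha]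
            have hagree : ∀ w : FreeMonoid A, c ∉ w.toList → φ' w = φ w := by
              intro w
              induction w using FreeMonoid.inductionOn' with
              | one => intro _; simp
              | of_mul b xs ih =>
                  intro h
                  have htl : (of b * xs).toList = b :: xs.toList := rfl
                  rw [htl] at h
                  have hb : b ≠ c := fun hbc => h (by simp [hbc])
                  have hxs : c ∉ xs.toList := fun hmem => h (List.mem_cons_of_mem b hmem)
                  rw [map_mul, map_mul, hφ'a b hb, ih hxs]
            have hcard' : Nat.card {a : A // φ' (FreeMonoid.of a) ≠ 1} ≤ k := by
              have hsub : {a : A | φ' (FreeMonoid.of a) ≠ 1} ⊂ {a : A | φ (FreeMonoid.of a) ≠ 1} := by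
                constructor
                · intro a ha
                  simp only [Set.mem_setOf_eq] at ha ⊢
                  by_cases hac : a = c
                  · exact absurd (hac ▸ hφ'c) ha
                  · rw [← hφ'a a hac]; exact ha
                · intro hcontra
                  have : φ' (of c) ≠ 1 := hcontra (by simpa using hx)
                  exact this hφ'c
              have hlt := Set.ncard_lt_ncard hsub (Set.toFinite _)
              have e1 : Nat.card {a : A // φ' (FreeMonoid.of a) ≠ 1} =
                  {a : A | φ' (FreeMonoid.of a) ≠ 1}.ncard := (Nat.card_coe_set_eq _).symm ▸ rfl
              have e2 : Nat.card {a : A // φ (FreeMonoid.of a) ≠ 1} =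
                  {a : A | φ (FreeMonoid.of a) ≠ 1}.ncard := (Nat.card_coe_set_eq _).symm ▸ rfl
              omega
            -- the c-free slices are star-free
            have hSFK : ∀ p : M, SF {w : FreeMonoid A | φ w = p ∧ c ∉ w.toList} := by
              intro p
              have heq : {w : FreeMonoid A | φ w = p ∧ c ∉ w.toList} =
                  (φ' ⁻¹' {p}) ∩ {w : FreeMonoid A | c ∉ w.toList} := by
                ext w
                simp only [Set.mem_setOf_eq, Set.mem_inter_iff, Set.mem_preimage,
                  Set.mem_singleton_iff]
                constructor
                · rintro ⟨h1, h2⟩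
                  exact ⟨by rw [hagree w h2, h1], h2⟩
                · rintro ⟨h1, h2⟩
                  exact ⟨by rw [← hagree w h2, h1], h2⟩
              rw [heq]
              exact SF.inter (ihk A φ' hcard' p) (SF.cfree c)
            -- the local divisor
            set x := φ (of c) with hxdef
            have hcardLD : Nat.card (LDc x) ≤ n := by
              have := LDc.card_lt (x := x) hap hx
              omega
            have hSFtheta : ∀ e : LDc x, SF ((theta x) ⁻¹' {e}) := by
              intro e
              exact ihn (LDc x) (LDc.aperiodic hap) hcardLD
                (Nat.card {g : M // theta x (FreeMonoid.of g) ≠ 1}) M (theta x) le_rfl e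
            have hSFZ : ∀ e : LDc x,
                SF {w : FreeMonoid A | okD c w.toList ∧
                  ofList (sig c φ w.toList) ∈ (theta x) ⁻¹' {e}} := by
              intro e
              exact sig_transfer φ c hSFK (hSFtheta e)
            -- the decomposition of the preimage
            have hfinal : φ ⁻¹' {m} = ((φ ⁻¹' {m}) ∩ {w : FreeMonoid A | c ∉ w.toList}) ∪
                ⋃ t : {t : M × LDc x × M // t.1 * (t.2.1).1 * t.2.2 = m},
                  Lang.cat (Lang.cat (Lang.cat {w : FreeMonoid A | φ w = t.1.1 ∧ c ∉ w.toList}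
                    {FreeMonoid.of c})
                    {w : FreeMonoid A | okD c w.toList ∧
                      ofList (sig c φ w.toList) ∈ (theta x) ⁻¹' {t.1.2.1}})
                    {w : FreeMonoid A | φ w = t.1.2.2 ∧ c ∉ w.toList} := by
              ext w
              constructor
              · intro hw
                rw [Set.mem_preimage, Set.mem_singleton_iff] at hw
                by_cases hc : c ∈ w.toList
                · right
                  obtain ⟨u, y, hu, hy⟩ := first_split hc
                  obtain ⟨z, v, hz, hv, hzv⟩ := tail_split y
                  have hval : (theta x (ofList (sig c φ z))).1 = x * φ (ofList z) :=
                    theta_sig φ c hz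
                  have hw' : w = ((ofList u * of c) * ofList z) * ofList v :=
                    toList.injective (by simp [hy, hzv])
                  have hm : φ (ofList u) * (theta x (ofList (sig c φ z))).1 * φ (ofList v) = m := by
                    rw [hval, ← hw, hw']
                    simp only [map_mul, ← hxdef, mul_assoc]
                  refine Set.mem_iUnion.mpr
                    ⟨⟨(φ (ofList u), theta x (ofList (sig c φ z)), φ (ofList v)), hm⟩, ?_⟩
                  exact ⟨(ofList u * of c) * ofList z,
                    ⟨ofList u * of c, ⟨ofList u, ⟨rfl, by simpa using hu⟩, of c, rfl, rfl⟩,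
                      ofList z, ⟨by simpa using hz, rfl⟩, rfl⟩,
                    ofList v, ⟨rfl, by simpa using hv⟩, hw'⟩
                · exact Or.inl ⟨hw, hc⟩
              · intro hw
                rcases hw with ⟨hm, -⟩ | hw
                · exact hm
                · obtain ⟨⟨⟨p, e, q⟩, hpeq⟩, ht⟩ := Set.mem_iUnion.mp hw
                  obtain ⟨s3, ⟨s2, ⟨s1, ⟨hφ1, -⟩, oc, hoc, rfl⟩, z, ⟨hokz, hez⟩, rfl⟩,
                    v, ⟨hφv, -⟩, rfl⟩ := ht
                  have hoc' : oc = of c := hoc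
                  subst hoc'
                  have hez' : theta x (ofList (sig c φ z.toList)) = e := hez
                  have hval : (e).1 = x * φ z := by
                    rw [← hez']
                    have := theta_sig φ c hokz
                    simpa using this
                  rw [Set.mem_preimage, Set.mem_singleton_iff]
                  have hpeq' : p * e.1 * q = m := hpeq
                  rw [← hpeq', hval]
                  simp only [map_mul, hφ1, hφv, ← hxdef, mul_assoc]
            rw [hfinal]
            refine SF.union ?_ (SF.iUnion ?_)
            · have heq : (φ ⁻¹' {m}) ∩ {w : FreeMonoid A | c ∉ w.toList} =
                  {w : FreeMonoid A | φ w = m ∧ c ∉ w.toList} := by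
                ext w
                simp only [Set.mem_preimage, Set.mem_singleton_iff, Set.mem_inter_iff,
                  Set.mem_setOf_eq]
              rw [heq]
              exact hSFK m
            · intro t
              exact (((hSFK t.1.1).concat (SF.letter c)).concat (hSFZ t.1.2.1)).concat
                (hSFK t.1.2.2)

end Main

/-! ### Part D4 : transport along a bijection of alphabets, and the final assembly -/

section Transport

variable {α β : Type*}

theorem SF_preimage_map (e : α ≃ β) {P : Set (FreeMonoid β)} (hP : SF P) :
    SF ((FreeMonoid.map (⇑e)) ⁻¹' P) := by
  have hinv : ∀ w : FreeMonoid β, FreeMonoid.map (⇑e) (FreeMonoid.map (⇑e.symm) w) = w := by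
    intro w
    apply toList.injective
    simp [toList_map, List.map_map]
  have hinv' : ∀ w : FreeMonoid α, FreeMonoid.map (⇑e.symm) (FreeMonoid.map (⇑e) w) = w := by
    intro w
    apply toList.injective
    simp [toList_map, List.map_map]
  induction hP with
  | full => exact SF.full
  | letter b =>
      have : (FreeMonoid.map (⇑e)) ⁻¹' {FreeMonoid.of b} = {FreeMonoid.of (e.symm b)} := by
        ext w
        simp only [Set.mem_preimage, Set.mem_singleton_iff]
        constructor
        · intro h
          have := congrArg (FreeMonoid.map (⇑e.symm)) h
          rw [hinv'] at this
          rw [this]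
          apply toList.injective
          simp [toList_map]
        · rintro rfl
          apply toList.injective
          simp [toList_map]
      rw [this]
      exact SF.letter _
  | union h1 h2 ih1 ih2 =>
      rw [Set.preimage_union]
      exact ih1.union ih2
  | diff h1 h2 ih1 ih2 =>
      rw [Set.preimage_diff]
      exact ih1.diff ih2
  | @concat P1 P2 h1 h2 ih1 ih2 =>
      have : (FreeMonoid.map (⇑e)) ⁻¹' (Lang.cat P1 P2) =
          Lang.cat ((FreeMonoid.map (⇑e)) ⁻¹' P1) ((FreeMonoid.map (⇑e)) ⁻¹' P2) := by
        ext w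
        simp only [Set.mem_preimage, Lang.cat, Set.mem_setOf_eq]
        constructor
        · rintro ⟨p, hp, q, hq, hpq⟩
          refine ⟨FreeMonoid.map (⇑e.symm) p, ?_, FreeMonoid.map (⇑e.symm) q, ?_, ?_⟩
          · show FreeMonoid.map (⇑e) (FreeMonoid.map (⇑e.symm) p) ∈ P1
            rw [hinv p]; exact hp
          · show FreeMonoid.map (⇑e) (FreeMonoid.map (⇑e.symm) q) ∈ P2
            rw [hinv q]; exact hq
          · have := congrArg (FreeMonoid.map (⇑e.symm)) hpq
            rw [hinv', map_mul] at this
            exact this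
        · rintro ⟨p, hp, q, hq, rfl⟩
          exact ⟨FreeMonoid.map (⇑e) p, hp, FreeMonoid.map (⇑e) q, hq, map_mul _ _ _⟩
      rw [this]
      exact ih1.concat ih2

end Transport

section Final

/-- The hard direction of Schützenberger's theorem: a language recognized by a finite
aperiodic monoid is star-free. -/
theorem sf_preimage_singleton {A : Type*} [Finite A] {M : Type} [Monoid M] [Finite M]
    (hap : Aperiodic M) (φ : FreeMonoid A →* M) (m : M) : SF (φ ⁻¹' {m}) := by
  obtain ⟨n, ⟨e⟩⟩ := Finite.exists_equiv_fin A
  set φ' : FreeMonoid (Fin n) →* M := φ.comp (FreeMonoid.map (⇑e.symm)) with hφ'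
  have hcomp : ∀ w : FreeMonoid A, φ' (FreeMonoid.map (⇑e) w) = φ w := by
    intro w
    rw [hφ']
    simp only [MonoidHom.comp_apply]
    congr 1
    apply toList.injective
    simp [toList_map, List.map_map]
  have heq : φ ⁻¹' {m} = (FreeMonoid.map (⇑e)) ⁻¹' (φ' ⁻¹' {m}) := by
    ext w
    simp only [Set.mem_preimage, Set.mem_singleton_iff, hcomp]
  rw [heq]
  apply SF_preimage_map e
  exact main0 (Nat.card M) M hap le_rfl
    (Nat.card {a : Fin n // φ' (FreeMonoid.of a) ≠ 1}) (Fin n) φ' le_rfl m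

theorem SF_of_recog {A : Type*} [Finite A] {L : Set (FreeMonoid A)} (h : Recog L) : SF L := by
  classical
  obtain ⟨M, _, _, hap, φ, hφ⟩ := h
  have hdec : φ ⁻¹' (φ '' L) = ⋃ m : {m : M // m ∈ φ '' L}, φ ⁻¹' {(m : M)} := by
    ext w
    simp only [Set.mem_preimage, Set.mem_iUnion, Set.mem_singleton_iff]
    constructor
    · intro hw
      exact ⟨⟨φ w, hw⟩, rfl⟩
    · rintro ⟨⟨p, hp⟩, hpw⟩
      rw [hpw]
      exact hp
  rw [← hφ, hdec]
  exact SF.iUnion fun m => sf_preimage_singleton hap φ (m : M)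

theorem SF_to_recog {A : Type*} [Finite A] {L : Set (FreeMonoid A)} (h : SF L) : Recog L := by
  induction h with
  | full => exact recog_full
  | letter a => exact recog_letter a
  | union h1 h2 ih1 ih2 => exact ih1.union ih2
  | diff h1 h2 ih1 ih2 => exact ih1.diff ih2
  | @concat K K' h1 h2 ih1 ih2 =>
      obtain ⟨M, _, _, hap, φ, hφ⟩ := ih1
      obtain ⟨N, _, _, hap', ψ, hψ⟩ := ih2
      refine ⟨SP M N, inferInstance, inferInstance, SP.aperiodic hap hap', tau φ ψ, ?_⟩
      rw [recog_iff_sat] at hφ hψ ⊢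
      exact tau_recog φ ψ hφ hψ

end Final

end Schutz

/-- **Schützenberger's theorem.**  For a language `L ⊆ A*` over a finite alphabet `A`,
the following are equivalent: (1) `L` is star-free; (2) the syntactic monoid
`Synt(L) = A*/≡_L` is finite and aperiodic; (3) `L` is recognized by a finite aperiodic
monoid, i.e. there are a finite aperiodic monoid `M` and a homomorphism `φ : A* → M`
with `φ⁻¹(φ(L)) = L`. -/
theorem schutzenberger {A : Type*} [Finite A] (L : Set (FreeMonoid A)) :
    (SF L ↔
      Finite (syntacticCon L).Quotient ∧ Aperiodic (syntacticCon L).Quotient) ∧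
    (SF L ↔
      ∃ (M : Type) (_ : Monoid M), Finite M ∧ Aperiodic M ∧
        ∃ φ : FreeMonoid A →* M, φ ⁻¹' (φ '' L) = L) := by
  constructor
  · constructor
    · intro h
      exact Schutz.recog_to_syntactic L (Schutz.SF_to_recog h)
    · rintro ⟨h1, h2⟩
      exact Schutz.SF_of_recog (Schutz.syntactic_to_recog L h1 h2)
  · constructor
    · intro h
      exact Schutz.SF_to_recog h
    · intro h
      exact Schutz.SF_of_recog h
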